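/- (Hoeffding decoupling for U-statistics.) Let 𝒳 be a measurable space, let X_1, …, X_n be i.i.d. 𝒳-valued random variables with n even, let T be a countable index set, and let q_τ : 𝒳 × 𝒳 → ℝ, τ ∈ T, be a family of uniformly bounded measurable functions, each symmetric in its two arguments. Then E[ sup_{τ ∈ T} (2/(n(n−1))) Σ_{1 ≤ i < j ≤ n} q_τ(X_i, X_j) ] ≤ E[ sup_{τ ∈ T} (2/n) Σ_{i=1}^{n/2} q_τ(X_i, X_{n/2 + i}) ]. -/

import Mathlib

open MeasureTheory Finset
open scoped ENNReal

noncomputable section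

/-- A labeled data point z = (x, y) ∈ ℝ^d × ℝ^L. -/
abbrev Pt (d L : ℕ) := (Fin d → ℝ) × (Fin L → ℝ)

/-- Inner product ⟨y, y'⟩ of label vectors. -/
def ipY {L : ℕ} (y y' : Fin L → ℝ) : ℝ := ∑ i, y i * y' i

/-- Bilinear form xᵀ A x'. -/
def qForm {d : ℕ} (A : Matrix (Fin d) (Fin d) ℝ) (x x' : Fin d → ℝ) : ℝ :=
  ∑ i, ∑ j, x i * A i j * x' j

/-- Euclidean norm ‖x‖₂. -/
def norm2 {d : ℕ} (x : Fin d → ℝ) : ℝ := Real.sqrt (∑ i, x i ^ 2)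

/-- Frobenius norm ‖A‖_F. -/
def frobNorm {d : ℕ} (A : Matrix (Fin d) (Fin d) ℝ) : ℝ :=
  Real.sqrt (∑ i, ∑ j, (A i j) ^ 2)

/-- Loss ℓ(A; z, z') := g(⟨y, y'⟩)·(⟨y, y'⟩ − xᵀ A x')² + λ·Tr(A). -/
def lossFn {d L : ℕ} (g : ℝ → ℝ) (lam : ℝ) (A : Matrix (Fin d) (Fin d) ℝ)
    (z z' : Pt d L) : ℝ :=
  g (ipY z.2 z'.2) * (ipY z.2 z'.2 - qForm A z.1 z'.1) ^ 2 + lam * A.trace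

/-- Empirical risk L̂(A; D) := (1/(n(n−1))) Σᵢ Σ_{j≠i} ℓ(A; zᵢ, zⱼ). -/
def empRisk {d L : ℕ} (g : ℝ → ℝ) (lam : ℝ) {n : ℕ} (A : Matrix (Fin d) (Fin d) ℝ)
    (D : Fin n → Pt d L) : ℝ :=
  (1 / ((n : ℝ) * ((n : ℝ) - 1))) * ∑ i, ∑ j ∈ univ.erase i, lossFn g lam A (D i) (D j)

/-- Population risk L(A) := E_{z,z' i.i.d. ∼ P}[ℓ(A; z, z')]. -/
def popRisk {d L : ℕ} (g : ℝ → ℝ) (lam : ℝ) (P : Measure (Pt d L))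
    (A : Matrix (Fin d) (Fin d) ℝ) : ℝ :=
  ∫ z, (∫ z', lossFn g lam A z z' ∂P) ∂P

/-- Risk relative to the training set, L̃(A; D) := (1/n) Σₖ E_{z∼P}[ℓ(A; z, zₖ)]. -/
def tilRisk {d L : ℕ} (g : ℝ → ℝ) (lam : ℝ) (P : Measure (Pt d L)) {n : ℕ}
    (A : Matrix (Fin d) (Fin d) ℝ) (D : Fin n → Pt d L) : ℝ :=
  (1 / (n : ℝ)) * ∑ k, ∫ z, lossFn g lam A z (D k) ∂P

/-- Law of a Rademacher random variable: uniform on {−1, +1}. -/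
def radMeasure : Measure ℝ :=
  (2⁻¹ : ℝ≥0∞) • Measure.dirac (-1) + (2⁻¹ : ℝ≥0∞) • Measure.dirac 1


section Decoupling


lemma exists_perm_pair {n : ℕ} {u v u' v' : Fin n} (huv : u ≠ v) (h' : u' ≠ v') :
    ∃ π : Equiv.Perm (Fin n), π u' = u ∧ π v' = v := by
  classical
  set c := Equiv.swap u' u v' with hc
  have hcu : c ≠ u := by
    rcases eq_or_ne v' u with h1 | h1
    · rw [hc, h1, Equiv.swap_apply_right]
      intro h2
      exact h' (h2.trans h1.symm)
    · rcases eq_or_ne v' u' with h2 | h2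
      · exact absurd h2.symm h'
      · rw [hc, Equiv.swap_apply_of_ne_of_ne h2 h1]
        exact h1
  refine ⟨Equiv.swap c v * Equiv.swap u' u, ?_, ?_⟩
  · rw [Equiv.Perm.mul_apply, Equiv.swap_apply_left,
      Equiv.swap_apply_of_ne_of_ne hcu.symm huv]
  · rw [Equiv.Perm.mul_apply, ← hc, Equiv.swap_apply_left]

lemma perm_pair_sum_const {n : ℕ} (f : Fin n → Fin n → ℝ) {u v u' v' : Fin n}
    (huv : u ≠ v) (h' : u' ≠ v') :
    ∑ σ : Equiv.Perm (Fin n), f (σ u) (σ v)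
      = ∑ σ : Equiv.Perm (Fin n), f (σ u') (σ v') := by
  obtain ⟨π, hπu, hπv⟩ := exists_perm_pair huv h'
  exact Fintype.sum_equiv (Equiv.mulRight π) _ _
    (fun σ => by simp [Equiv.Perm.mul_apply, hπu, hπv])

lemma perm_decouple {n m : ℕ} (hn : n = 2 * m) (hm : 0 < m) (f : Fin n → Fin n → ℝ)
    (hf : ∀ u v, f u v = f v u) :
    (2 / ((n:ℝ) * ((n:ℝ) - 1))) *
        ∑ p ∈ Finset.univ.filter (fun p : Fin n × Fin n => p.1 < p.2), f p.1 p.2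
      = (n.factorial : ℝ)⁻¹ * ∑ σ : Equiv.Perm (Fin n),
          (2 / (n:ℝ)) * ∑ i : Fin m,
            f (σ ⟨(i:ℕ), lt_of_lt_of_le i.isLt (by omega)⟩)
              (σ ⟨m + (i:ℕ), (Nat.add_lt_add_left i.isLt m).trans_le (by omega)⟩) := by
  classical
  have hn2 : 2 ≤ n := by omega
  set a : Fin m → Fin n := fun i => ⟨(i:ℕ), by have := i.isLt; omega⟩ with ha
  set b : Fin m → Fin n := fun i => ⟨m + (i:ℕ), by have := i.isLt; omega⟩ with hb
  have hab : ∀ i, a i ≠ b i := fun i =>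
    Fin.ne_of_val_ne (show (i:ℕ) ≠ m + (i:ℕ) by omega)
  set i0 : Fin m := ⟨0, hm⟩ with hi0
  set S : ℝ := ∑ σ : Equiv.Perm (Fin n), f (σ (a i0)) (σ (b i0)) with hS
  set Tlt : ℝ := ∑ p ∈ Finset.univ.filter (fun p : Fin n × Fin n => p.1 < p.2), f p.1 p.2
    with hT
  have key1 : ∑ σ : Equiv.Perm (Fin n), ∑ i : Fin m, f (σ (a i)) (σ (b i)) = (m:ℝ) * S := by
    rw [Finset.sum_comm]
    rw [Finset.sum_congr rfl (fun i _ => perm_pair_sum_const f (hab i) (hab i0))]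
    rw [Finset.sum_const, Finset.card_univ, Fintype.card_fin, nsmul_eq_mul]
  have hB2 : ∀ σ : Equiv.Perm (Fin n),
      ∑ p ∈ Finset.univ.offDiag, f (σ p.1) (σ p.2)
        = ∑ p ∈ (Finset.univ : Finset (Fin n)).offDiag, f p.1 p.2 := by
    intro σ
    refine Finset.sum_equiv (σ.prodCongr σ) (fun p => ?_) (fun p _ => rfl)
    simp [Finset.mem_offDiag]
  have key2 : ((n:ℝ) * (n:ℝ) - (n:ℝ)) * S
      = (n.factorial : ℝ) * ∑ p ∈ (Finset.univ : Finset (Fin n)).offDiag, f p.1 p.2 := by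
    have hcard : ((Finset.univ : Finset (Fin n)).offDiag.card : ℝ) = (n:ℝ)*(n:ℝ) - (n:ℝ) := by
      rw [Finset.offDiag_card, Finset.card_univ, Fintype.card_fin,
        Nat.cast_sub (Nat.le_mul_of_pos_left n (by omega)), Nat.cast_mul]
    calc ((n:ℝ) * (n:ℝ) - (n:ℝ)) * S
        = ∑ _p ∈ (Finset.univ : Finset (Fin n)).offDiag, S := by
          rw [Finset.sum_const, nsmul_eq_mul, hcard]
      _ = ∑ p ∈ (Finset.univ : Finset (Fin n)).offDiag,
            ∑ σ : Equiv.Perm (Fin n), f (σ p.1) (σ p.2) := by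
          refine Finset.sum_congr rfl fun p hp => ?_
          have hne : p.1 ≠ p.2 := (Finset.mem_offDiag.1 hp).2.2
          exact perm_pair_sum_const f (hab i0) hne
      _ = ∑ σ : Equiv.Perm (Fin n), ∑ p ∈ (Finset.univ : Finset (Fin n)).offDiag,
            f (σ p.1) (σ p.2) := Finset.sum_comm
      _ = ∑ _σ : Equiv.Perm (Fin n), ∑ p ∈ (Finset.univ : Finset (Fin n)).offDiag, f p.1 p.2 :=
          Finset.sum_congr rfl fun σ _ => hB2 σ
      _ = (n.factorial : ℝ) * ∑ p ∈ (Finset.univ : Finset (Fin n)).offDiag, f p.1 p.2 := by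
          rw [Finset.sum_const, Finset.card_univ, Fintype.card_perm, Fintype.card_fin,
            nsmul_eq_mul]
  have h5 : ∑ p ∈ (Finset.univ : Finset (Fin n)).offDiag, f p.1 p.2 = 2 * Tlt := by
    have hsplit : (Finset.univ : Finset (Fin n)).offDiag
        = Finset.univ.filter (fun p : Fin n × Fin n => p.1 < p.2)
          ∪ Finset.univ.filter (fun p : Fin n × Fin n => p.2 < p.1) := by
      ext p
      simp only [Finset.mem_offDiag, Finset.mem_union, Finset.mem_filter, Finset.mem_univ,
        true_and]
      exact ne_iff_lt_or_gt
    have hdisj : Disjoint (Finset.univ.filter (fun p : Fin n × Fin n => p.1 < p.2))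
        (Finset.univ.filter (fun p : Fin n × Fin n => p.2 < p.1)) := by
      rw [Finset.disjoint_left]
      intro p hp1 hp2
      simp only [Finset.mem_filter] at hp1 hp2
      exact absurd hp2.2 (not_lt.2 hp1.2.le)
    have hswap : ∑ p ∈ Finset.univ.filter (fun p : Fin n × Fin n => p.2 < p.1), f p.1 p.2
        = Tlt := by
      rw [hT]
      refine Finset.sum_equiv (Equiv.prodComm (Fin n) (Fin n)) (fun p => ?_) (fun p _ => ?_)
      · simp
      · exact hf p.1 p.2
    rw [hsplit, Finset.sum_union hdisj, hswap, hT]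
    ring
  rw [h5] at key2
  rw [← Finset.mul_sum, key1]
  have hN : (n:ℝ) ≠ 0 := (Nat.cast_pos.mpr (by omega)).ne'
  have hN1 : (n:ℝ) - 1 ≠ 0 := by
    have : (2:ℝ) ≤ (n:ℝ) := by exact_mod_cast hn2
    intro h; linarith
  have hF : (n.factorial : ℝ) ≠ 0 := Nat.cast_ne_zero.2 n.factorial_ne_zero
  have hnm : (n:ℝ) = 2 * (m:ℝ) := by exact_mod_cast hn
  have h6 : 2/(n:ℝ) * ((m:ℝ)*S) = S := by
    field_simp
    linear_combination (-S) * hnm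
  rw [h6, inv_mul_eq_div, eq_div_iff hF]
  field_simp
  linear_combination (-1 : ℝ) * key2

lemma abs_iSup_le' {T : Type*} [Nonempty T] {g : T → ℝ} {C : ℝ} (h : ∀ τ, |g τ| ≤ C) :
    |⨆ τ, g τ| ≤ C := by
  have hb : BddAbove (Set.range g) := ⟨C, by rintro _ ⟨τ, rfl⟩; exact (abs_le.1 (h τ)).2⟩
  rw [abs_le]
  constructor
  · obtain ⟨τ₀⟩ := ‹Nonempty T›
    exact le_trans (abs_le.1 (h τ₀)).1 (le_ciSup hb τ₀)
  · exact ciSup_le fun τ => (abs_le.1 (h τ)).2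

end Decoupling

set_option maxHeartbeats 2000000 in
theorem stmt4 {X : Type*} [MeasurableSpace X]
    (mu : Measure X) [IsProbabilityMeasure mu]
    {T : Type*} [Countable T] [Nonempty T]
    (q : T → X → X → ℝ)
    (hqm : ∀ tau : T, Measurable fun p : X × X => q tau p.1 p.2)
    (hsymm : ∀ (tau : T) (x y : X), q tau x y = q tau y x)
    (B : ℝ) (hbound : ∀ (tau : T) (x y : X), |q tau x y| ≤ B)
    {n m : ℕ} (hn : n = 2 * m) :
    (∫ Xs, (⨆ tau : T, (2 / ((n : ℝ) * ((n : ℝ) - 1))) *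
        ∑ p ∈ Finset.univ.filter (fun p : Fin n × Fin n => p.1 < p.2),
          q tau (Xs p.1) (Xs p.2)) ∂(Measure.pi fun _ : Fin n => mu)) ≤
    ∫ Xs, (⨆ tau : T, (2 / (n : ℝ)) * ∑ i : Fin m,
        q tau (Xs ⟨(i : ℕ), by have := i.isLt; omega⟩)
              (Xs ⟨m + (i : ℕ), by have := i.isLt; omega⟩))
      ∂(Measure.pi fun _ : Fin n => mu) := by
  classical
  rcases Nat.eq_zero_or_pos m with hm | hm
  · subst hm
    simp only [Nat.mul_zero] at hn
    subst hn
    simp [ciSup_const]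
  · have hn2 : 2 ≤ n := by omega
    set ν : Measure (Fin n → X) := Measure.pi fun _ : Fin n => mu with hν
    set V : (Fin n → X) → ℝ := fun Ys => ⨆ tau : T, (2 / (n : ℝ)) * ∑ i : Fin m,
        q tau (Ys ⟨(i : ℕ), by have := i.isLt; omega⟩)
          (Ys ⟨m + (i : ℕ), by have := i.isLt; omega⟩) with hV
    set U : (Fin n → X) → ℝ := fun Xs => ⨆ tau : T, (2 / ((n : ℝ) * ((n : ℝ) - 1))) *
        ∑ p ∈ Finset.univ.filter (fun p : Fin n × Fin n => p.1 < p.2),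
          q tau (Xs p.1) (Xs p.2) with hU
    show ∫ Xs, U Xs ∂ν ≤ ∫ Xs, V Xs ∂ν
    set CV : ℝ := 2 / (n : ℝ) * ((m : ℝ) * B) with hCV
    set CU : ℝ := 2 / ((n : ℝ) * ((n : ℝ) - 1)) *
        (((Finset.univ.filter (fun p : Fin n × Fin n => p.1 < p.2)).card : ℝ) * B) with hCU
    have hnpos : (0 : ℝ) < (n : ℝ) := by exact_mod_cast (by omega : 0 < n)
    have hn1pos : (0 : ℝ) < (n : ℝ) - 1 := by
      have : (2 : ℝ) ≤ (n : ℝ) := by exact_mod_cast hn2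
      linarith
    have hVinner : ∀ (Ys : Fin n → X) (tau : T),
        |(2 / (n : ℝ)) * ∑ i : Fin m,
          q tau (Ys ⟨(i : ℕ), by have := i.isLt; omega⟩)
            (Ys ⟨m + (i : ℕ), by have := i.isLt; omega⟩)| ≤ CV := by
      intro Ys tau
      rw [abs_mul, abs_of_nonneg (by positivity : (0:ℝ) ≤ 2 / (n : ℝ))]
      refine mul_le_mul_of_nonneg_left ?_ (by positivity)
      refine (Finset.abs_sum_le_sum_abs _ _).trans ?_
      calc ∑ i : Fin m, |q tau (Ys ⟨(i : ℕ), by have := i.isLt; omega⟩)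
              (Ys ⟨m + (i : ℕ), by have := i.isLt; omega⟩)|
          ≤ ∑ _i : Fin m, B := Finset.sum_le_sum fun i _ => hbound tau _ _
        _ = (m : ℝ) * B := by
            rw [Finset.sum_const, Finset.card_univ, Fintype.card_fin, nsmul_eq_mul]
    have hUinner : ∀ (Xs : Fin n → X) (tau : T),
        |(2 / ((n : ℝ) * ((n : ℝ) - 1))) *
          ∑ p ∈ Finset.univ.filter (fun p : Fin n × Fin n => p.1 < p.2),
            q tau (Xs p.1) (Xs p.2)| ≤ CU := by
      intro Xs tau
      rw [abs_mul, abs_of_nonneg (by positivity : (0:ℝ) ≤ 2 / ((n : ℝ) * ((n : ℝ) - 1)))]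
      refine mul_le_mul_of_nonneg_left ?_ (by positivity)
      refine (Finset.abs_sum_le_sum_abs _ _).trans ?_
      calc ∑ p ∈ Finset.univ.filter (fun p : Fin n × Fin n => p.1 < p.2),
            |q tau (Xs p.1) (Xs p.2)|
          ≤ ∑ _p ∈ Finset.univ.filter (fun p : Fin n × Fin n => p.1 < p.2), B :=
            Finset.sum_le_sum fun p _ => hbound tau _ _
        _ = _ := by rw [Finset.sum_const, nsmul_eq_mul]
    have habsV : ∀ Ys, |V Ys| ≤ CV := fun Ys => abs_iSup_le' (hVinner Ys)
    have habsU : ∀ Xs, |U Xs| ≤ CU := fun Xs => abs_iSup_le' (hUinner Xs)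
    have hbddV : ∀ Ys : Fin n → X, BddAbove (Set.range fun tau : T =>
        (2 / (n : ℝ)) * ∑ i : Fin m,
          q tau (Ys ⟨(i : ℕ), by have := i.isLt; omega⟩)
            (Ys ⟨m + (i : ℕ), by have := i.isLt; omega⟩)) := by
      intro Ys
      exact ⟨CV, by rintro _ ⟨tau, rfl⟩; exact (abs_le.1 (hVinner Ys tau)).2⟩
    have hmeasV : Measurable V := by
      apply Measurable.iSup
      intro tau
      apply Measurable.const_mul
      apply Finset.measurable_sum
      intro i _
      have h2 : Measurable fun Ys : Fin n → X =>
          (Ys ⟨(i : ℕ), by have := i.isLt; omega⟩,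
            Ys ⟨m + (i : ℕ), by have := i.isLt; omega⟩) :=
        (measurable_pi_apply _).prodMk (measurable_pi_apply _)
      exact (hqm tau).comp h2
    have hmeasU : Measurable U := by
      apply Measurable.iSup
      intro tau
      apply Measurable.const_mul
      apply Finset.measurable_sum
      intro p _
      have h2 : Measurable fun Xs : Fin n → X => (Xs p.1, Xs p.2) :=
        (measurable_pi_apply _).prodMk (measurable_pi_apply _)
      exact (hqm tau).comp h2
    have hIntOf : ∀ (W : (Fin n → X) → ℝ) (C : ℝ), Measurable W → (∀ x, |W x| ≤ C) →
        Integrable W ν := by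
      intro W C hWm hWb
      refine (integrable_const C).mono' hWm.aestronglyMeasurable ?_
      exact Filter.Eventually.of_forall fun x => by
        simpa [Real.norm_eq_abs] using hWb x
    have hF : (n.factorial : ℝ) ≠ 0 := Nat.cast_ne_zero.2 n.factorial_ne_zero
    have hcomp : ∀ σ : Equiv.Perm (Fin n),
        ∫ Xs, V (fun i => Xs (σ i)) ∂ν = ∫ Xs, V Xs ∂ν := by
      intro σ
      have hmp := measurePreserving_arrowCongr' (fun _ : Fin n => mu) (fun _ : Fin n => mu)
        σ.symm (MeasurableEquiv.refl X) (fun _ => MeasurePreserving.id mu)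
      rw [← hmp.integral_comp' V]
      refine integral_congr_ae (Filter.Eventually.of_forall fun Xs => ?_)
      have : (MeasurableEquiv.arrowCongr' σ.symm (MeasurableEquiv.refl X)) Xs
          = fun i => Xs (σ i) := by
        funext i
        simp [MeasurableEquiv.arrowCongr', Equiv.arrowCongr', Equiv.arrowCongr]
      dsimp only
      rw [this]
    have hpt : ∀ Xs : Fin n → X, U Xs ≤ (n.factorial : ℝ)⁻¹ *
        ∑ σ : Equiv.Perm (Fin n), V (fun i => Xs (σ i)) := by
      intro Xs
      refine ciSup_le fun tau => ?_
      have hident := perm_decouple hn hm (fun u v => q tau (Xs u) (Xs v))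
        (fun u v => hsymm tau _ _)
      refine le_trans (le_of_eq hident) ?_
      refine mul_le_mul_of_nonneg_left (Finset.sum_le_sum fun σ _ => ?_) (by positivity)
      exact le_ciSup (hbddV (fun i => Xs (σ i))) tau
    have hIntU : Integrable U ν := hIntOf U CU hmeasU habsU
    have hmeasVσ : ∀ σ : Equiv.Perm (Fin n),
        Measurable (fun Xs : Fin n → X => V (fun i => Xs (σ i))) := by
      intro σ
      have h2 : Measurable fun (Xs : Fin n → X) (i : Fin n) => Xs (σ i) :=
        measurable_pi_lambda _ fun i => measurable_pi_apply (σ i)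
      exact hmeasV.comp h2
    have hIntVσ : ∀ σ : Equiv.Perm (Fin n),
        Integrable (fun Xs : Fin n → X => V (fun i => Xs (σ i))) ν := fun σ =>
      hIntOf (fun Xs : Fin n → X => V (fun i => Xs (σ i))) CV (hmeasVσ σ)
        (fun Xs => habsV (fun i => Xs (σ i)))
    have hIntBig : Integrable (fun Xs : Fin n → X => (n.factorial : ℝ)⁻¹ *
        ∑ σ : Equiv.Perm (Fin n), V (fun i => Xs (σ i))) ν :=
      (integrable_finset_sum _ (fun σ _ => hIntVσ σ)).const_mul _
    calc ∫ Xs, U Xs ∂ν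
        ≤ ∫ Xs, ((n.factorial : ℝ)⁻¹ *
            ∑ σ : Equiv.Perm (Fin n), V (fun i => Xs (σ i))) ∂ν :=
          integral_mono hIntU hIntBig hpt
      _ = (n.factorial : ℝ)⁻¹ *
            ∑ σ : Equiv.Perm (Fin n), ∫ Xs, V (fun i => Xs (σ i)) ∂ν := by
          rw [integral_const_mul, integral_finset_sum _ (fun σ _ => hIntVσ σ)]
      _ = (n.factorial : ℝ)⁻¹ * ∑ _σ : Equiv.Perm (Fin n), ∫ Xs, V Xs ∂ν := by
          rw [Finset.sum_congr rfl fun σ _ => hcomp σ]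
      _ = ∫ Xs, V Xs ∂ν := by
          rw [Finset.sum_const, Finset.card_univ, Fintype.card_perm, Fintype.card_fin,
            nsmul_eq_mul, ← mul_assoc, inv_mul_cancel₀ hF, one_mul]


end
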